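/- Let ε ∈ [0,1) and let k ≥ 1 be an integer. For every fixed (δ₁,…,δ_{k−1}) ∈ [0,1]^{k−1}, there exists a unique δ₀ ∈ (0, 1/2) such that the partial derivative of R_ε with respect to its first argument vanishes at (δ₀, δ₁,…,δ_{k−1}), i.e., ∂R_ε/∂δ₀ (δ₀, δ₁,…,δ_{k−1}) = 0. -/

import Mathlib

/-- The binary entropy function (base 2), with `H2 0 = H2 1 = 0`. -/
noncomputable def H2 (x : ℝ) : ℝ := -(x * Real.logb 2 x) - (1 - x) * Real.logb 2 (1 - x)

/-- The function `R_ε(δ₀,…,δ_{k−1})`. -/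
noncomputable def Rfun (ε : ℝ) (k : ℕ) (δ : ℕ → ℝ) : ℝ :=
  (∑ i ∈ Finset.range k, (1 - ε) ^ (i + 1) * H2 (δ i) * ∏ m ∈ Finset.range i, δ m) /
  (1 + ∑ i ∈ Finset.range k, (1 - ε) ^ (i + 1) * ∏ m ∈ Finset.range (i + 1), δ m)



lemma H2_eq (x : ℝ) : H2 x = Real.binEntropy x / Real.log 2 := by
  unfold H2 Real.binEntropy Real.logb
  rw [Real.log_inv, Real.log_inv]
  ring

lemma H2_continuous : Continuous H2 := by
  have : H2 = fun x => Real.binEntropy x / Real.log 2 := funext H2_eq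
  rw [this]; exact Real.binEntropy_continuous.div_const _

lemma H2_le_one (x : ℝ) : H2 x ≤ 1 := by
  rw [H2_eq, div_le_one (Real.log_pos one_lt_two)]
  exact Real.binEntropy_le_log_two

lemma H2_zero : H2 0 = 0 := by simp [H2]

lemma H2_half : H2 (1/2) = 1 := by
  rw [H2_eq, show (1:ℝ)/2 = 2⁻¹ by norm_num, Real.binEntropy_two_inv,
    div_self (Real.log_pos one_lt_two).ne']

lemma hasDerivAt_H2 {t : ℝ} (h0 : t ≠ 0) (h1 : t ≠ 1) :
    HasDerivAt H2 ((Real.log (1 - t) - Real.log t) / Real.log 2) t := by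
  have : H2 = fun x => Real.binEntropy x / Real.log 2 := funext H2_eq
  rw [this]
  exact (Real.hasDerivAt_binEntropy h0 h1).div_const _

noncomputable def psiAux (B t : ℝ) : ℝ :=
  (Real.log (1 - t) - Real.log t) * (1 + B * t) / Real.log 2 - B * H2 t

lemma psiAux_hasDerivAt (B : ℝ) {t : ℝ} (h0 : 0 < t) (h1 : t < 1) :
    HasDerivAt (psiAux B) ((-(1 / (1 - t)) - 1 / t) * (1 + B * t) / Real.log 2) t := by
  have hne1 : (1 : ℝ) - t ≠ 0 := by intro h; linarith [h]
  have hL1 : HasDerivAt (fun s : ℝ => Real.log (1 - s)) (-(1 / (1 - t))) t := by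
    have := (Real.hasDerivAt_log hne1).comp t ((hasDerivAt_id t).const_sub 1)
    exact this.congr_deriv (by ring)
  have hL2 : HasDerivAt (fun s : ℝ => Real.log s) (1 / t) t := by
    simpa [one_div] using Real.hasDerivAt_log h0.ne'
  have hL : HasDerivAt (fun s : ℝ => Real.log (1 - s) - Real.log s)
      (-(1 / (1 - t)) - 1 / t) t := hL1.sub hL2
  have hM : HasDerivAt (fun s : ℝ => 1 + B * s) B t := by
    simpa using ((hasDerivAt_id t).const_mul B).const_add 1
  have h2 := hasDerivAt_H2 h0.ne' (by intro h; exact absurd h (ne_of_lt h1))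
  have hfin := ((hL.mul hM).div_const (Real.log 2)).sub (h2.const_mul B)
  exact hfin.congr_deriv (by ring)

lemma psiAux_half (B : ℝ) : psiAux B (1 / 2) = -B := by
  unfold psiAux
  norm_num [H2_half]

lemma psiAux_strictAntiOn (B : ℝ) (hB : 0 ≤ B) :
    StrictAntiOn (psiAux B) (Set.Ioc 0 (1 / 2)) := by
  apply strictAntiOn_of_deriv_neg (convex_Ioc _ _)
  · intro t ht
    have h1 : t < 1 := lt_of_le_of_lt ht.2 (by norm_num)
    exact ((psiAux_hasDerivAt B ht.1 h1).continuousAt).continuousWithinAt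
  · intro t ht
    rw [interior_Ioc] at ht
    have h0 : 0 < t := ht.1
    have h1 : t < 1 := lt_trans ht.2 (by norm_num)
    rw [(psiAux_hasDerivAt B h0 h1).deriv]
    apply div_neg_of_neg_of_pos _ (Real.log_pos one_lt_two)
    have hpos : 0 < 1 + B * t := by nlinarith
    have hsub : 0 < 1 - t := by linarith
    have h1t : 0 < 1 / (1 - t) := by positivity
    have h2t : 0 < 1 / t := by positivity
    nlinarith

lemma H2_nonneg {x : ℝ} (h0 : 0 ≤ x) (h1 : x ≤ 1) : 0 ≤ H2 x := by
  rw [H2_eq]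
  exact div_nonneg (Real.binEntropy_nonneg h0 h1) (Real.log_nonneg one_le_two)

/-- Let `ε ∈ [0,1)` and `k ≥ 1`.  For every fixed `(δ₁,…,δ_{k−1}) ∈ [0,1]^{k−1}` there
exists a unique `δ₀ ∈ (0,1/2)` at which the partial derivative of `R_ε` with respect to
its first argument vanishes. -/
theorem exists_unique_vanishing_first_partial
    (ε : ℝ) (hε : ε ∈ Set.Ico (0 : ℝ) 1) (k : ℕ) (hk : 1 ≤ k)
    (δ : ℕ → ℝ) (hδ : ∀ i, 1 ≤ i → i < k → δ i ∈ Set.Icc (0 : ℝ) 1) :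
    ∃! t : ℝ, t ∈ Set.Ioo (0 : ℝ) (1 / 2) ∧
      deriv (fun s : ℝ => Rfun ε k (Function.update δ 0 s)) t = 0 := by
  classical
  obtain ⟨hε0, hε1⟩ := hε
  obtain ⟨n, rfl⟩ : ∃ n, k = n + 1 := ⟨k - 1, (Nat.succ_pred_eq_of_pos hk).symm⟩
  set a : ℝ := 1 - ε with ha_def
  have ha : 0 < a := by rw [ha_def]; linarith
  have hδ' : ∀ m, m < n → 0 ≤ δ (m + 1) ∧ δ (m + 1) ≤ 1 := by
    intro m hm
    have := hδ (m + 1) (by omega) (by omega)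
    exact ⟨this.1, this.2⟩
  have hQnonneg : ∀ j, j ≤ n → 0 ≤ ∏ m ∈ Finset.range j, δ (m + 1) := by
    intro j hj
    apply Finset.prod_nonneg
    intro m hm
    exact (hδ' m (lt_of_lt_of_le (Finset.mem_range.mp hm) hj)).1
  obtain ⟨A, hA_def⟩ : ∃ A : ℝ,
      A = ∑ i ∈ Finset.range n, a ^ (i + 2) * H2 (δ (i + 1)) * ∏ m ∈ Finset.range i, δ (m + 1) :=
    ⟨_, rfl⟩
  obtain ⟨B, hB_def⟩ : ∃ B : ℝ,
      B = ∑ i ∈ Finset.range (n + 1), a ^ (i + 1) * ∏ m ∈ Finset.range i, δ (m + 1) := ⟨_, rfl⟩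
  have hAnonneg : 0 ≤ A := by
    rw [hA_def]
    apply Finset.sum_nonneg
    intro i hi
    have hm := Finset.mem_range.mp hi
    have hQi := hQnonneg i hm.le
    have hH := H2_nonneg (hδ' i hm).1 (hδ' i hm).2
    have := pow_nonneg ha.le (i + 2)
    positivity
  have hBpos : 0 < B := by
    rw [hB_def]
    apply Finset.sum_pos'
    · intro i hi
      exact mul_nonneg (pow_nonneg ha.le _)
        (hQnonneg i (Nat.lt_succ_iff.mp (Finset.mem_range.mp hi)))
    · refine ⟨0, Finset.mem_range.mpr (Nat.succ_pos n), ?_⟩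
      simpa using ha
  -- key inequality A < a * B
  have haB : a * B = (∑ i ∈ Finset.range n, a ^ (i + 2) * ∏ m ∈ Finset.range i, δ (m + 1))
      + a ^ (n + 2) * ∏ m ∈ Finset.range n, δ (m + 1) := by
    rw [hB_def, Finset.mul_sum, Finset.sum_range_succ]
    congr 1
    · exact Finset.sum_congr rfl fun i _ => by ring
    · ring
  have hterm : ∀ i ∈ Finset.range n,
      a ^ (i + 2) * H2 (δ (i + 1)) * ∏ m ∈ Finset.range i, δ (m + 1)
        ≤ a ^ (i + 2) * ∏ m ∈ Finset.range i, δ (m + 1) := by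
    intro i hi
    have hm := Finset.mem_range.mp hi
    have hQi := hQnonneg i hm.le
    have hH := H2_le_one (δ (i + 1))
    rw [mul_assoc]
    exact mul_le_mul_of_nonneg_left (by nlinarith) (pow_nonneg ha.le _)
  have hABlt : A < a * B := by
    rcases eq_or_lt_of_le (hQnonneg n le_rfl) with hQn | hQn
    · obtain ⟨m, hm, hm0⟩ := Finset.prod_eq_zero_iff.mp hQn.symm
      have hex : ∃ m, m < n ∧ δ (m + 1) = 0 := ⟨m, Finset.mem_range.mp hm, hm0⟩
      have hm₀n := (Nat.find_spec hex).1
      have hm₀0 := (Nat.find_spec hex).2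
      have hQm₀ : 0 < ∏ m ∈ Finset.range (Nat.find hex), δ (m + 1) := by
        apply Finset.prod_pos
        intro i hi
        have hilt := Finset.mem_range.mp hi
        have hin : i < n := lt_trans hilt hm₀n
        exact lt_of_le_of_ne (hδ' i hin).1
          (fun h => Nat.find_min hex hilt ⟨hin, h.symm⟩)
      have hlt : A < ∑ i ∈ Finset.range n, a ^ (i + 2) * ∏ m ∈ Finset.range i, δ (m + 1) := by
        rw [hA_def]
        apply Finset.sum_lt_sum hterm
        refine ⟨Nat.find hex, Finset.mem_range.mpr hm₀n, ?_⟩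
        rw [hm₀0, H2_zero]
        simpa using mul_pos (pow_pos ha (Nat.find hex + 2)) hQm₀
      rw [haB, ← hQn, mul_zero, add_zero]
      exact hlt
    · have h1 : A ≤ ∑ i ∈ Finset.range n, a ^ (i + 2) * ∏ m ∈ Finset.range i, δ (m + 1) := by
        rw [hA_def]; exact Finset.sum_le_sum hterm
      have h2 : 0 < a ^ (n + 2) * ∏ m ∈ Finset.range n, δ (m + 1) :=
        mul_pos (pow_pos ha _) hQn
      rw [haB]; linarith
  -- rewrite the function
  have key : (fun s : ℝ => Rfun ε (n + 1) (Function.update δ 0 s))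
      = fun s : ℝ => (a * H2 s + s * A) / (1 + s * B) := by
    funext s
    unfold Rfun
    rw [← ha_def]
    congr 1
    · rw [Finset.sum_range_succ']
      have e1 : ∀ i ∈ Finset.range n,
          a ^ (i + 1 + 1) * H2 (Function.update δ 0 s (i + 1)) *
              ∏ m ∈ Finset.range (i + 1), Function.update δ 0 s m
            = s * (a ^ (i + 2) * H2 (δ (i + 1)) * ∏ m ∈ Finset.range i, δ (m + 1)) := by
        intro i _
        rw [Finset.prod_range_succ']
        simp only [Function.update_self, Function.update_of_ne (Nat.succ_ne_zero _)]
        ring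
      rw [Finset.sum_congr rfl e1, ← Finset.mul_sum, ← hA_def]
      simp only [Function.update_self, Finset.prod_range_zero, pow_one]
      ring
    · congr 1
      have e2 : ∀ i ∈ Finset.range (n + 1),
          a ^ (i + 1) * ∏ m ∈ Finset.range (i + 1), Function.update δ 0 s m
            = s * (a ^ (i + 1) * ∏ m ∈ Finset.range i, δ (m + 1)) := by
        intro i _
        rw [Finset.prod_range_succ']
        simp only [Function.update_self, Function.update_of_ne (Nat.succ_ne_zero _)]
        ring
      rw [Finset.sum_congr rfl e2, ← Finset.mul_sum, ← hB_def]
  rw [key]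
  -- characterize vanishing of the derivative
  have hchar : ∀ t ∈ Set.Ioo (0 : ℝ) (1 / 2),
      (deriv (fun s : ℝ => (a * H2 s + s * A) / (1 + s * B)) t = 0 ↔ psiAux B t = -A / a) := by
    intro t ht
    have h0 : (0 : ℝ) < t := ht.1
    have h1 : t < 1 := lt_trans ht.2 (by norm_num)
    have hden : 0 < 1 + t * B := by nlinarith
    have hnum : HasDerivAt (fun s : ℝ => a * H2 s + s * A)
        (a * ((Real.log (1 - t) - Real.log t) / Real.log 2) + A) t := by
      have hh := (hasDerivAt_H2 h0.ne' h1.ne).const_mul a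
      have h2 := (hasDerivAt_id t).mul_const A
      exact (hh.add h2).congr_deriv (by ring)
    have hden' : HasDerivAt (fun s : ℝ => 1 + s * B) B t := by
      simpa using ((hasDerivAt_id t).mul_const B).const_add 1
    have hdiv := hnum.div hden' hden.ne'
    have hid : (a * ((Real.log (1 - t) - Real.log t) / Real.log 2) + A) * (1 + t * B)
        - (a * H2 t + t * A) * B = a * psiAux B t + A := by
      unfold psiAux; ring
    rw [show (fun s : ℝ => (a * H2 s + s * A) / (1 + s * B)) = ((fun s => a * H2 s + s * A) / fun s => 1 + s * B) from rfl, hdiv.deriv, hid, div_eq_zero_iff]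
    have hsq : (1 + t * B) ^ 2 ≠ 0 := pow_ne_zero _ hden.ne'
    constructor
    · rintro (h | h)
      · rw [eq_div_iff ha.ne']
        linear_combination h
      · exact absurd h hsq
    · intro h
      left
      rw [eq_div_iff ha.ne'] at h
      linear_combination h
  -- existence via IVT
  have hlog2 : 0 < Real.log 2 := Real.log_pos one_lt_two
  set t₁ : ℝ := min (1 / 4) (Real.exp (-(1 + B) * Real.log 2)) with ht₁def
  have ht₁0 : 0 < t₁ := lt_min (by norm_num) (Real.exp_pos _)
  have ht₁q : t₁ ≤ 1 / 4 := min_le_left _ _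
  have ht₁h : t₁ < 1 / 2 := lt_of_le_of_lt ht₁q (by norm_num)
  have hpsit₁ : 0 ≤ psiAux B t₁ := by
    have hL1 : -Real.log 2 ≤ Real.log (1 - t₁) := by
      have h := Real.log_le_log (by norm_num : (0:ℝ) < 2⁻¹) (by linarith : (2:ℝ)⁻¹ ≤ 1 - t₁)
      rwa [Real.log_inv] at h
    have hL2 : Real.log t₁ ≤ -(1 + B) * Real.log 2 := by
      have h := Real.log_le_log ht₁0 (min_le_right (1/4 : ℝ) _)
      rwa [Real.log_exp] at h
    have hLB : B * Real.log 2 ≤ Real.log (1 - t₁) - Real.log t₁ := by nlinarith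
    have hL0 : 0 ≤ Real.log (1 - t₁) - Real.log t₁ := by nlinarith [hBpos.le]
    have hfac : (1 : ℝ) ≤ 1 + B * t₁ := by nlinarith [hBpos.le, ht₁0.le]
    have hmain : B * Real.log 2 ≤ (Real.log (1 - t₁) - Real.log t₁) * (1 + B * t₁) := by
      nlinarith
    have h1' : B ≤ (Real.log (1 - t₁) - Real.log t₁) * (1 + B * t₁) / Real.log 2 := by
      rw [le_div_iff₀ hlog2]; linarith
    have h2' : B * H2 t₁ ≤ B := by nlinarith [hBpos.le, H2_le_one t₁]
    unfold psiAux
    linarith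
  have hcle : -A / a ≤ 0 := by
    have : 0 ≤ A / a := div_nonneg hAnonneg ha.le
    rw [neg_div]; linarith
  have hBc : -B < -A / a := by
    have : A / a < B := (div_lt_iff₀ ha).mpr (by linarith [hABlt])
    rw [neg_div]; linarith
  have hcont : ContinuousOn (psiAux B) (Set.Icc t₁ (1 / 2)) := by
    intro t ht
    have h0 : 0 < t := lt_of_lt_of_le ht₁0 ht.1
    have h1 : t < 1 := lt_of_le_of_lt ht.2 (by norm_num)
    exact ((psiAux_hasDerivAt B h0 h1).continuousAt).continuousWithinAt
  have hmem : -A / a ∈ Set.Icc (psiAux B (1 / 2)) (psiAux B t₁) := by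
    rw [psiAux_half]
    exact ⟨hBc.le, le_trans hcle hpsit₁⟩
  obtain ⟨t, htmem, htval⟩ := intermediate_value_Icc' ht₁h.le hcont hmem
  have ht0 : 0 < t := lt_of_lt_of_le ht₁0 htmem.1
  have hthalf : t < 1 / 2 := by
    rcases lt_or_eq_of_le htmem.2 with h | h
    · exact h
    · exfalso
      rw [h, psiAux_half] at htval
      exact absurd htval hBc.ne
  have htIoo : t ∈ Set.Ioo (0 : ℝ) (1 / 2) := ⟨ht0, hthalf⟩
  refine ⟨t, ⟨htIoo, (hchar t htIoo).mpr htval⟩, ?_⟩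
  rintro t' ⟨ht'mem, ht'eq⟩
  have h1 := (hchar t' ht'mem).mp ht'eq
  exact (psiAux_strictAntiOn B hBpos.le).injOn ⟨ht'mem.1, ht'mem.2.le⟩
    ⟨ht0, hthalf.le⟩ (by rw [h1, htval])
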